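/- As 𝕂⟦u⟧-modules, 𝕂⟦u⟧ is isomorphic to the 𝕂-linear dual Hom_𝕂(𝕂((u))/u𝕂⟦u⟧, 𝕂), where 𝕂((u))/u𝕂⟦u⟧ is the quotient module spanned by u^{−i} for i ≥ 0, with the module structure u · u^{−i} = u^{−i+1} (and u·u^0 = 0 in the quotient). -/

import Mathlib

/-- The `𝕂⟦u⟧`-submodule `u·𝕂⟦u⟧` of `𝕂((u))`. -/
noncomputable def uLattice (𝕂 : Type) [Field 𝕂] :
    Submodule (PowerSeries 𝕂) (LaurentSeries 𝕂) :=
  Submodule.map (Algebra.linearMap (PowerSeries 𝕂) (LaurentSeries 𝕂))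
    (Ideal.span {PowerSeries.X})

instance (𝕂 : Type) [Field 𝕂] : IsScalarTower 𝕂 (PowerSeries 𝕂) (LaurentSeries 𝕂) :=
  ⟨fun c f x => by
    rw [Algebra.smul_def, Algebra.smul_def, map_mul, mul_assoc]
    have h1 : (algebraMap 𝕂 (PowerSeries 𝕂)) c = PowerSeries.C c := rfl
    rw [h1, LaurentSeries.coe_algebraMap,
      show ((HahnSeries.ofPowerSeries ℤ 𝕂) (PowerSeries.C c)) = HahnSeries.C c from
        HahnSeries.ofPowerSeries_C c, HahnSeries.C_mul_eq_smul]
    rfl⟩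

section Aux

variable (𝕂 : Type) [Field 𝕂]

/-- The pairing: `B f x = coeff 0 of f * x`. -/
noncomputable def Bpair (f : PowerSeries 𝕂) : LaurentSeries 𝕂 →ₗ[𝕂] 𝕂 where
  toFun x := ((f : LaurentSeries 𝕂) * x).coeff 0
  map_add' x y := by
    show ((f : LaurentSeries 𝕂) * (x + y)).coeff 0 = _
    rw [mul_add, HahnSeries.coeff_add]
  map_smul' c x := by
    show ((f : LaurentSeries 𝕂) * (c • x)).coeff 0 = _
    rw [← HahnSeries.C_mul_eq_smul, ← mul_assoc, mul_comm ((f : LaurentSeries 𝕂)) (HahnSeries.C c),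
      mul_assoc, HahnSeries.C_mul_eq_smul, HahnSeries.coeff_smul]
    rfl

lemma coe_smul (c : 𝕂) (f : PowerSeries 𝕂) :
    ((c • f : PowerSeries 𝕂) : LaurentSeries 𝕂) = c • (f : LaurentSeries 𝕂) := by
  have : (c • f : PowerSeries 𝕂) = PowerSeries.C c * f := by
    rw [PowerSeries.smul_eq_C_mul]
  rw [this, map_mul, HahnSeries.ofPowerSeries_C, HahnSeries.C_mul_eq_smul]

lemma Bpair_vanish (f : PowerSeries 𝕂) {x : LaurentSeries 𝕂} (hx : x ∈ uLattice 𝕂) :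
    Bpair 𝕂 f x = 0 := by
  obtain ⟨g, hg, rfl⟩ := hx
  obtain ⟨h, rfl⟩ := Ideal.mem_span_singleton'.mp hg
  show ((f : LaurentSeries 𝕂) * (((h * PowerSeries.X : PowerSeries 𝕂) : LaurentSeries 𝕂))).coeff 0 = 0
  rw [← map_mul]
  have := HahnSeries.ofPowerSeries_apply_coeff (Γ := ℤ) (f * (h * PowerSeries.X)) 0
  simp only [Nat.cast_zero] at this
  rw [show ((HahnSeries.ofPowerSeries ℤ 𝕂) (f * (h * PowerSeries.X))).coeff 0
      = PowerSeries.coeff 0 (f * (h * PowerSeries.X)) from this]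
  simp [PowerSeries.coeff_zero_eq_constantCoeff]

lemma mem_uLattice_of (w : LaurentSeries 𝕂) (h : ∀ m : ℤ, m ≤ 0 → w.coeff m = 0) :
    w ∈ uLattice 𝕂 := by
  rcases eq_or_ne w 0 with rfl | hw
  · exact Submodule.zero_mem _
  have hord : 1 ≤ w.order := by
    by_contra hle
    push_neg at hle
    exact (mt HahnSeries.coeff_order_eq_zero.mp hw) (h _ (by omega))
  refine ⟨PowerSeries.X ^ w.order.toNat * w.powerSeriesPart, ?_, ?_⟩
  · exact Ideal.mul_mem_right _ _ (Ideal.pow_mem_of_mem _ (Ideal.mem_span_singleton_self _) _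
      (by omega))
  · show (HahnSeries.ofPowerSeries ℤ 𝕂) _ = w
    rw [map_mul, HahnSeries.ofPowerSeries_X_pow]
    rw [show ((w.order.toNat : ℤ)) = w.order by omega]
    exact LaurentSeries.single_order_mul_powerSeriesPart w

lemma single_smul' (n : ℤ) (c : 𝕂) :
    HahnSeries.single n c = c • (HahnSeries.single n (1:𝕂) : LaurentSeries 𝕂) := by
  ext m
  rw [HahnSeries.coeff_smul]
  by_cases hm : m = n
  · subst hm; simp
  · simp [HahnSeries.coeff_single_of_ne hm]

/-- Decomposition: every Laurent series is a finite sum of monomials `single n c` (n ≤ 0)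
plus an element of `uLattice`. -/
lemma decomp (x : LaurentSeries 𝕂) :
    x - (∑ n ∈ Finset.Icc (min x.order 0) 0, HahnSeries.single n (x.coeff n)) ∈ uLattice 𝕂 := by
  apply mem_uLattice_of
  intro m hm
  rw [HahnSeries.coeff_sub]
  have hc : (∑ n ∈ Finset.Icc (min x.order 0) 0, HahnSeries.single n (x.coeff n)).coeff m
      = if m ∈ Finset.Icc (min x.order 0) 0 then x.coeff m else 0 := by
    rw [show (∑ n ∈ Finset.Icc (min x.order 0) 0, (HahnSeries.single n) (x.coeff n)).coeff m
        = ∑ n ∈ Finset.Icc (min x.order 0) 0, (HahnSeries.single n (x.coeff n)).coeff m from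
      map_sum (HahnSeries.coeff.addMonoidHom m) _ _]
    split_ifs with hmem
    · rw [Finset.sum_eq_single_of_mem m hmem]
      · simp
      · intro b _ hb; exact HahnSeries.coeff_single_of_ne (Ne.symm hb)
    · apply Finset.sum_eq_zero
      intro b hb
      exact HahnSeries.coeff_single_of_ne (fun h => hmem (h ▸ hb))
  rw [hc]
  split_ifs with hmem
  · ring
  · have : m < min x.order 0 := by
      simp only [Finset.mem_Icc] at hmem
      omega
    rw [HahnSeries.coeff_eq_zero_of_lt_order (lt_of_lt_of_le this (min_le_left _ _))]
    ring

noncomputable def Emap : PowerSeries 𝕂 →ₗ[𝕂]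
    (LaurentSeries 𝕂 ⧸ (uLattice 𝕂).restrictScalars 𝕂) →ₗ[𝕂] 𝕂 where
  toFun f := Submodule.liftQ _ (Bpair 𝕂 f)
    (fun x hx => LinearMap.mem_ker.mpr (Bpair_vanish 𝕂 f hx))
  map_add' f g := by
    apply Submodule.linearMap_qext
    ext x
    show (((f + g : PowerSeries 𝕂) : LaurentSeries 𝕂) * x).coeff 0
      = ((f : LaurentSeries 𝕂) * x).coeff 0 + ((g : LaurentSeries 𝕂) * x).coeff 0
    rw [map_add, add_mul, HahnSeries.coeff_add]
  map_smul' c f := by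
    apply Submodule.linearMap_qext
    ext x
    show (((c • f : PowerSeries 𝕂) : LaurentSeries 𝕂) * x).coeff 0
      = c • ((f : LaurentSeries 𝕂) * x).coeff 0
    rw [coe_smul, ← HahnSeries.C_mul_eq_smul, mul_assoc, HahnSeries.C_mul_eq_smul,
      HahnSeries.coeff_smul]

noncomputable def Fmap :
    ((LaurentSeries 𝕂 ⧸ (uLattice 𝕂).restrictScalars 𝕂) →ₗ[𝕂] 𝕂) →ₗ[𝕂] PowerSeries 𝕂 where
  toFun φ := PowerSeries.mk fun n => φ (Submodule.Quotient.mk (HahnSeries.single (-(n : ℤ)) 1))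
  map_add' φ ψ := by
    ext n
    simp [PowerSeries.coeff_mk]
  map_smul' c φ := by
    ext n
    simp [PowerSeries.coeff_mk]

lemma FE (f : PowerSeries 𝕂) : Fmap 𝕂 (Emap 𝕂 f) = f := by
  ext n
  show PowerSeries.coeff n (PowerSeries.mk fun n =>
    (Emap 𝕂 f) (Submodule.Quotient.mk (HahnSeries.single (-(n : ℤ)) 1))) = _
  rw [PowerSeries.coeff_mk]
  show Bpair 𝕂 f (HahnSeries.single (-(n : ℤ)) 1) = _
  show ((f : LaurentSeries 𝕂) * HahnSeries.single (-(n : ℤ)) 1).coeff 0 = _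
  have h := HahnSeries.coeff_mul_single_add (r := (1 : 𝕂))
    (x := (f : LaurentSeries 𝕂)) (a := (n : ℤ)) (b := -(n : ℤ))
  rw [add_neg_cancel] at h
  rw [h, mul_one, LaurentSeries.coeff_coe_powerSeries]

lemma Bpair_single (φ : (LaurentSeries 𝕂 ⧸ (uLattice 𝕂).restrictScalars 𝕂) →ₗ[𝕂] 𝕂)
    (n : ℤ) (hn : n ≤ 0) (c : 𝕂) :
    Bpair 𝕂 (Fmap 𝕂 φ) (HahnSeries.single n c)
      = φ (Submodule.Quotient.mk (HahnSeries.single n c)) := by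
  show (((Fmap 𝕂 φ : PowerSeries 𝕂) : LaurentSeries 𝕂) * HahnSeries.single n c).coeff 0 = _
  have h := HahnSeries.coeff_mul_single_add (r := c)
    (x := ((Fmap 𝕂 φ : PowerSeries 𝕂) : LaurentSeries 𝕂)) (a := -n) (b := n)
  rw [neg_add_cancel] at h
  rw [h]
  have hn' : (-n) = (((-n).toNat : ℕ) : ℤ) := by omega
  rw [hn', LaurentSeries.coeff_coe_powerSeries]
  show PowerSeries.coeff (-n).toNat (PowerSeries.mk fun m =>
    φ (Submodule.Quotient.mk (HahnSeries.single (-(m : ℤ)) 1))) * c = _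
  rw [PowerSeries.coeff_mk]
  rw [show (-(((-n).toNat : ℕ) : ℤ)) = n by omega]
  rw [single_smul' 𝕂 n c, Submodule.Quotient.mk_smul, map_smul]
  simp [mul_comm]

lemma EF (φ : (LaurentSeries 𝕂 ⧸ (uLattice 𝕂).restrictScalars 𝕂) →ₗ[𝕂] 𝕂) :
    Emap 𝕂 (Fmap 𝕂 φ) = φ := by
  apply Submodule.linearMap_qext
  ext y
  show Bpair 𝕂 (Fmap 𝕂 φ) y = φ (Submodule.Quotient.mk y)
  set t : LaurentSeries 𝕂 :=
    ∑ n ∈ Finset.Icc (min y.order 0) 0, HahnSeries.single n (y.coeff n) with ht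
  have hmem : y - t ∈ (uLattice 𝕂).restrictScalars 𝕂 := decomp 𝕂 y
  have h1 : Bpair 𝕂 (Fmap 𝕂 φ) y = Bpair 𝕂 (Fmap 𝕂 φ) t := by
    have := Bpair_vanish 𝕂 (Fmap 𝕂 φ) (x := y - t) hmem
    rw [map_sub, sub_eq_zero] at this
    exact this
  have h2 : (Submodule.Quotient.mk y :
      LaurentSeries 𝕂 ⧸ (uLattice 𝕂).restrictScalars 𝕂) = Submodule.Quotient.mk t :=
    (Submodule.Quotient.eq _).mpr hmem
  rw [h1, h2, ht, map_sum, show (Submodule.Quotient.mk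
      (∑ n ∈ Finset.Icc (min y.order 0) 0, HahnSeries.single n (y.coeff n)) :
      LaurentSeries 𝕂 ⧸ (uLattice 𝕂).restrictScalars 𝕂)
    = ∑ n ∈ Finset.Icc (min y.order 0) 0,
        Submodule.Quotient.mk (HahnSeries.single n (y.coeff n)) from
      map_sum (Submodule.mkQ _) _ _, map_sum]
  apply Finset.sum_congr rfl
  intro n hn
  exact Bpair_single 𝕂 φ n (Finset.mem_Icc.mp hn).2 (y.coeff n)

end Aux

/-- As `𝕂⟦u⟧`-modules, `𝕂⟦u⟧ ≅ Hom_𝕂(𝕂((u))/u𝕂⟦u⟧, 𝕂)`, where the `𝕂⟦u⟧`-action on the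
dual is through the action on the quotient `𝕂((u))/u𝕂⟦u⟧` (the `𝕂⟦u⟧`-linearity of the
`𝕂`-linear isomorphism `e` is recorded by the compatibility `e(f·g)(x) = e(g)(f•x)`). -/
theorem stmt10 (𝕂 : Type) [Field 𝕂] :
    ∃ e : PowerSeries 𝕂 ≃ₗ[𝕂] ((LaurentSeries 𝕂 ⧸ uLattice 𝕂) →ₗ[𝕂] 𝕂),
      ∀ (f g : PowerSeries 𝕂) (x : LaurentSeries 𝕂 ⧸ uLattice 𝕂),
        e (f * g) x = e g (f • x) := by
  set e' : PowerSeries 𝕂 ≃ₗ[𝕂]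
      ((LaurentSeries 𝕂 ⧸ (uLattice 𝕂).restrictScalars 𝕂) →ₗ[𝕂] 𝕂) :=
    LinearEquiv.ofLinear (Emap 𝕂) (Fmap 𝕂)
      (LinearMap.ext fun φ => EF 𝕂 φ) (LinearMap.ext fun f => FE 𝕂 f) with he'
  set r := Submodule.Quotient.restrictScalarsEquiv 𝕂 (uLattice 𝕂) with hr
  refine ⟨e'.trans (LinearEquiv.arrowCongr r (LinearEquiv.refl 𝕂 𝕂)), ?_⟩
  intro f g x
  obtain ⟨y, rfl⟩ := Submodule.Quotient.mk_surjective _ x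
  have key : ∀ (h : PowerSeries 𝕂) (z : LaurentSeries 𝕂),
      (e'.trans (LinearEquiv.arrowCongr r (LinearEquiv.refl 𝕂 𝕂))) h
        (Submodule.Quotient.mk z) = ((h : LaurentSeries 𝕂) * z).coeff 0 := by
    intro h z
    rw [LinearEquiv.trans_apply, LinearEquiv.arrowCongr_apply]
    simp only [hr, Submodule.Quotient.restrictScalarsEquiv_symm_mk, LinearEquiv.refl_apply]
    rfl
  have hsm : f • (Submodule.Quotient.mk y : LaurentSeries 𝕂 ⧸ uLattice 𝕂)
      = Submodule.Quotient.mk (f • y) := (Submodule.Quotient.mk_smul _ _ _).symm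
  rw [key, hsm, key]
  rw [show (f • y : LaurentSeries 𝕂) = (f : LaurentSeries 𝕂) * y by
    rw [Algebra.smul_def, LaurentSeries.coe_algebraMap]]
  rw [map_mul]
  ring_nf
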